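/- arXiv:2001.11292 — 6 statements merged into one kernel-verified Lean document; each statement's English description precedes it below -/
import Mathlib

section
/- Let X₁,…,X_k be metric spaces and c : X₁ × ⋯ × X_k → ℝ a Lipschitz function. Suppose A_i ⊆ X_i and f_i : A_i → ℝ satisfy ∑_{i=1}^k f_i(x_i) ≤ c(x₁,…,x_k) for all x_i ∈ A_i. Then there exist Lipschitz functions f̃_i : X_i → ℝ, each with Lipschitz constant at most the Lipschitz constant of c, such that ∑_{i=1}^k f̃_i(x_i) ≤ c(x₁,…,x_k) for all x_i ∈ X_i, and f_i(x_i) ≤ f̃_i(x_i) for all x_i ∈ A_i. -/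
theorem stmt1 {k : ℕ} (X : Fin k → Type*) [∀ i, MetricSpace (X i)]
    (c : (∀ i, X i) → ℝ) (L : ℝ) (hL : 0 ≤ L)
    (hc : ∀ x y : ∀ i, X i, |c x - c y| ≤ L * ∑ i, dist (x i) (y i))
    (A : ∀ i, Set (X i)) (hA : ∀ i, (A i).Nonempty)
    (f : ∀ i, X i → ℝ)
    (hf : ∀ x : ∀ i, X i, (∀ i, x i ∈ A i) → ∑ i, f i (x i) ≤ c x) :
    ∃ g : ∀ i, X i → ℝ,
      (∀ i, ∀ a b : X i, |g i a - g i b| ≤ L * dist a b) ∧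
      (∀ x : ∀ i, X i, ∑ i, g i (x i) ≤ c x) ∧
      (∀ i, ∀ a ∈ A i, f i a ≤ g i a) := by
  classical
  -- key: coordinatewise Lipschitz property of c
  have hkey : ∀ (x : ∀ i, X i) (j : Fin k) (t t' : X j),
      |c (Function.update x j t) - c (Function.update x j t')| ≤ L * dist t t' := by
    intro x j t t'
    have h := hc (Function.update x j t) (Function.update x j t')
    have hsum : ∑ i, dist (Function.update x j t i) (Function.update x j t' i) = dist t t' := by
      rw [Finset.sum_eq_single_of_mem j (Finset.mem_univ j)]
      · simp
      · intro i _ hi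
        simp [Function.update_of_ne hi]
    rwa [hsum] at h
  suffices H : ∀ S : Finset (Fin k), ∃ g : ∀ i, X i → ℝ,
      (∀ i ∈ S, ∀ a b : X i, |g i a - g i b| ≤ L * dist a b) ∧
      (∀ x : ∀ i, X i, (∀ i ∉ S, x i ∈ A i) → ∑ i, g i (x i) ≤ c x) ∧
      (∀ i ∈ S, ∀ a ∈ A i, f i a ≤ g i a) ∧
      (∀ i ∉ S, g i = f i) by
    obtain ⟨g, h1, h2, h3, _⟩ := H Finset.univ
    exact ⟨g, fun i => h1 i (Finset.mem_univ i),
      fun x => h2 x (fun i hi => absurd (Finset.mem_univ i) hi),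
      fun i => h3 i (Finset.mem_univ i)⟩
  intro S
  induction S using Finset.induction_on with
  | empty =>
    exact ⟨f, by simp, fun x hx => hf x (fun i => hx i (by simp)), by simp, fun i _ => rfl⟩
  | @insert j S hj ih =>
    obtain ⟨g, hg1, hg2, hg3, hg4⟩ := ih
    set P : (∀ i, X i) → Prop := fun x => ∀ i, i ∉ S → i ≠ j → x i ∈ A i with hP
    set F : (∀ i, X i) → X j → ℝ :=
      fun x t => c (Function.update x j t) - ∑ i ∈ Finset.univ.erase j, g i (x i) with hF
    set T : X j → Set ℝ := fun t => (fun x => F x t) '' {x | P x} with hT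
    -- splitting a sum with an updated argument
    have hsplit : ∀ (x : ∀ i, X i) (t : X j),
        ∑ i, g i (Function.update x j t i)
          = g j t + ∑ i ∈ Finset.univ.erase j, g i (x i) := by
      intro x t
      rw [← Finset.add_sum_erase Finset.univ (fun i => g i (Function.update x j t i))
        (Finset.mem_univ j)]
      simp only [Function.update_self]
      congr 1
      refine Finset.sum_congr rfl fun i hi => ?_
      rw [Function.update_of_ne (Finset.ne_of_mem_erase hi)]
    obtain ⟨a0, ha0⟩ := hA j
    have hx0 : ∀ i, (fun i => (hA i).choose) i ∈ A i := fun i => (hA i).choose_spec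
    have hTne : ∀ t, (T t).Nonempty := by
      intro t
      exact ⟨F (fun i => (hA i).choose) t, ⟨fun i => (hA i).choose, fun i _ _ => hx0 i, rfl⟩⟩
    -- lower bound
    have hbdd : ∀ t x, P x → g j a0 - L * dist t a0 ≤ F x t := by
      intro t x hx
      have h2 := hg2 (Function.update x j a0) (by
        intro i hiS
        by_cases hij : i = j
        · subst hij; simpa using ha0
        · rw [Function.update_of_ne hij]; exact hx i hiS hij)
      rw [hsplit x a0] at h2
      have hk := hkey x j t a0
      have := abs_le.1 hk
      simp only [hF]
      linarith [this.1]
    have hTbdd : ∀ t, BddBelow (T t) := by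
      intro t
      exact ⟨g j a0 - L * dist t a0, by rintro y ⟨x, hx, rfl⟩; exact hbdd t x hx⟩
    set gj : X j → ℝ := fun t => sInf (T t) with hgj
    -- Lipschitz: one-sided
    have hlip1 : ∀ t t', gj t ≤ gj t' + L * dist t t' := by
      intro t t'
      have : gj t - L * dist t t' ≤ gj t' := by
        apply le_csInf (hTne t')
        rintro y ⟨x, hx, rfl⟩
        have h1 : gj t ≤ F x t := csInf_le (hTbdd t) ⟨x, hx, rfl⟩
        have hk := (abs_le.1 (hkey x j t t')).2
        simp only [hF] at h1 ⊢
        linarith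
      linarith
    have hlipj : ∀ a b : X j, |gj a - gj b| ≤ L * dist a b := by
      intro a b
      rw [abs_sub_le_iff]
      constructor
      · linarith [hlip1 a b]
      · have := hlip1 b a
        rw [dist_comm] at this
        linarith
    refine ⟨Function.update g j gj, ?_, ?_, ?_, ?_⟩
    · intro i hi a b
      by_cases hij : i = j
      · subst hij; rw [Function.update_self]; exact hlipj a b
      · rw [Function.update_of_ne hij]
        exact hg1 i ((Finset.mem_insert.1 hi).resolve_left hij) a b
    · intro x hx
      have hPx : P x := fun i hiS hij => hx i (by simp [hiS, hij])
      have h1 : gj (x j) ≤ F x (x j) := csInf_le (hTbdd (x j)) ⟨x, hPx, rfl⟩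
      have hFx : F x (x j) = c x - ∑ i ∈ Finset.univ.erase j, g i (x i) := by
        simp [hF, Function.update_eq_self]
      rw [← Finset.add_sum_erase Finset.univ (fun i => Function.update g j gj i (x i))
        (Finset.mem_univ j)]
      have hrest : ∑ i ∈ Finset.univ.erase j, Function.update g j gj i (x i)
          = ∑ i ∈ Finset.univ.erase j, g i (x i) := by
        refine Finset.sum_congr rfl fun i hi => ?_
        rw [Function.update_of_ne (Finset.ne_of_mem_erase hi)]
      simp only [Function.update_self, hrest]
      rw [hFx] at h1
      linarith
    · intro i hi a ha
      rcases Finset.mem_insert.1 hi with rfl | hiS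
      · rw [Function.update_self]
        apply le_csInf (hTne a)
        rintro y ⟨x, hx, rfl⟩
        have h2 := hg2 (Function.update x i a) (by
          intro i' hiS
          by_cases hij' : i' = i
          · subst hij'; simpa using ha
          · rw [Function.update_of_ne hij']; exact hx i' hiS hij')
        rw [hsplit x a] at h2
        have : g i a = f i a := by rw [hg4 i hj]
        simp only [hF]
        linarith
      · rw [Function.update_of_ne (by rintro rfl; exact hj hiS)]
        exact hg3 i hiS a ha
    · intro i hi
      have hij : i ≠ j := fun h => hi (h ▸ Finset.mem_insert_self j S)
      rw [Function.update_of_ne hij]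
      exact hg4 i (fun h => hi (Finset.mem_insert_of_mem h))
end

section
/- Let X₁,…,X_k be metric spaces and c : X₁ × ⋯ × X_k → ℝ a bounded function with uniform norm M. Suppose f_i : X_i → ℝ, i = 1,…,k, satisfy f_i(x_i) = inf { c(x₁,…,x_k) − ∑_{j≠i} f_j(x_j) : x_j ∈ X_j for j ≠ i } for every x_i ∈ X_i. Then there exist constants h₁,…,h_k ∈ ℝ summing to zero such that the functions f̃_i = f_i + h_i satisfy the same infimum identity and each f̃_i is bounded in absolute value by M · max{k, 3}. -/
private lemma le_of_eps {a b : ℝ} (h : ∀ ε : ℝ, 0 < ε → a ≤ b + ε) : a ≤ b := by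
  by_contra hc
  push_neg at hc
  have := h ((a - b) / 2) (by linarith)
  linarith

theorem stmt2 {k : ℕ} (hk : 2 ≤ k) (X : Fin k → Type*) [∀ i, MetricSpace (X i)]
    [∀ i, Nonempty (X i)] (c : (∀ i, X i) → ℝ) (M : ℝ)
    (hM : ∀ x, |c x| ≤ M)
    (f : ∀ i, X i → ℝ)
    (hf : ∀ i, ∀ xi : X i, IsGLB
      { r | ∃ x : ∀ j, X j, x i = xi ∧
          r = c x - ∑ j ∈ Finset.univ.erase i, f j (x j) }
      (f i xi)) :
    ∃ h : Fin k → ℝ, ∑ i, h i = 0 ∧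
      (∀ i, ∀ xi : X i, IsGLB
        { r | ∃ x : ∀ j, X j, x i = xi ∧
            r = c x - ∑ j ∈ Finset.univ.erase i, (f j (x j) + h j) }
        (f i xi + h i)) ∧
      (∀ i, ∀ xi : X i, |f i xi + h i| ≤ M * max (k : ℝ) 3) := by
  classical
  have hkpos : (0 : ℝ) < (k : ℝ) := by
    have : (0 : ℕ) < k := by omega
    exact_mod_cast this
  have hk1 : (1 : ℝ) ≤ (k : ℝ) := by
    have : (1 : ℕ) ≤ k := by omega
    exact_mod_cast this
  set x₀ : ∀ i, X i := fun i => Classical.arbitrary (X i) with hx₀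
  have hM0 : 0 ≤ M := le_trans (abs_nonneg _) (hM x₀)
  have hcub : ∀ x, c x ≤ M := fun x => le_trans (le_abs_self _) (hM x)
  have hclb : ∀ x, -M ≤ c x := fun x => neg_le_of_abs_le (hM x)
  -- Key fact: for all x, ∑ j, f j (x j) ≤ c x.
  have key : ∀ x : ∀ i, X i, ∑ j, f j (x j) ≤ c x := by
    intro x
    set i0 : Fin k := ⟨0, by omega⟩
    have h1 : f i0 (x i0) ≤ c x - ∑ j ∈ Finset.univ.erase i0, f j (x j) :=
      (hf i0 (x i0)).1 ⟨x, rfl, rfl⟩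
    have h2 : f i0 (x i0) + ∑ j ∈ Finset.univ.erase i0, f j (x j) = ∑ j, f j (x j) :=
      Finset.add_sum_erase Finset.univ (fun j => f j (x j)) (Finset.mem_univ i0)
    linarith
  -- Oscillation bound: f i z ≤ f i z' + 2M.
  have osc : ∀ i, ∀ z z' : X i, f i z ≤ f i z' + 2 * M := by
    intro i z z'
    apply le_of_eps
    intro ε hε
    obtain ⟨r, hrS, _, hrlt⟩ := (hf i z').exists_between (lt_add_of_pos_right _ hε)
    obtain ⟨x, hxi, rfl⟩ := hrS
    set x' := Function.update x i z with hx'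
    have hx'i : x' i = z := Function.update_self i z x
    have hsum : ∑ j ∈ Finset.univ.erase i, f j (x' j)
        = ∑ j ∈ Finset.univ.erase i, f j (x j) := by
      apply Finset.sum_congr rfl
      intro j hj
      have hji : j ≠ i := (Finset.mem_erase.mp hj).1
      rw [hx', Function.update_of_ne hji]
    have h1 : f i z ≤ c x' - ∑ j ∈ Finset.univ.erase i, f j (x' j) :=
      (hf i z).1 ⟨x', hx'i, rfl⟩
    have := hcub x'
    have := hclb x
    rw [hsum] at h1
    linarith
  -- each f i is bounded above
  have hbdd : ∀ i, BddAbove (Set.range (f i)) := by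
    intro i
    refine ⟨f i (x₀ i) + 2 * M, ?_⟩
    rintro r ⟨z, rfl⟩
    exact osc i z (x₀ i)
  have hne : ∀ i, (Set.range (f i)).Nonempty := fun i => Set.range_nonempty _
  set b : Fin k → ℝ := fun i => sSup (Set.range (f i)) with hb
  have hfb : ∀ i, ∀ z : X i, f i z ≤ b i := fun i z => le_csSup (hbdd i) ⟨z, rfl⟩
  have hbf : ∀ i, ∀ z : X i, b i ≤ f i z + 2 * M := by
    intro i z
    apply csSup_le (hne i)
    rintro r ⟨z', rfl⟩
    exact osc i z' z
  set t : ℝ := ∑ i, b i with ht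
  -- t ≤ M
  have htM : t ≤ M := by
    apply le_of_eps
    intro ε hε
    have hεk : 0 < ε / (k : ℝ) := div_pos hε hkpos
    have hz : ∀ i, ∃ z : X i, b i - ε / (k : ℝ) < f i z := by
      intro i
      obtain ⟨r, ⟨z, rfl⟩, hr⟩ := exists_lt_of_lt_csSup (hne i)
        (show b i - ε / (k : ℝ) < b i by linarith)
      exact ⟨z, hr⟩
    choose z hzs using hz
    have h1 : ∑ i, b i ≤ ∑ i, (f i (z i) + ε / (k : ℝ)) :=
      Finset.sum_le_sum fun i _ => by linarith [hzs i]
    have h2 : ∑ i, (f i (z i) + ε / (k : ℝ))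
        = (∑ i, f i (z i)) + (k : ℝ) * (ε / (k : ℝ)) := by
      rw [Finset.sum_add_distrib, Finset.sum_const, Finset.card_univ, Fintype.card_fin,
        nsmul_eq_mul]
    have h3 : (k : ℝ) * (ε / (k : ℝ)) = ε := by field_simp
    have h4 := key z
    have h5 := hcub z
    rw [h2, h3] at h1
    linarith
  -- -M ≤ t
  have hMt : -M ≤ t := by
    apply le_of_eps
    intro ε hε
    set i0 : Fin k := ⟨0, by omega⟩
    obtain ⟨r, hrS, _, hrlt⟩ := (hf i0 (x₀ i0)).exists_between
      (lt_add_of_pos_right _ hε)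
    obtain ⟨x, hxi, rfl⟩ := hrS
    have h1 : ∑ j ∈ Finset.univ.erase i0, f j (x j) ≤ ∑ j ∈ Finset.univ.erase i0, b j :=
      Finset.sum_le_sum fun j _ => hfb j (x j)
    have h2 : f i0 (x i0) + ∑ j ∈ Finset.univ.erase i0, b j ≤ b i0 + ∑ j ∈ Finset.univ.erase i0, b j := by
      linarith [hfb i0 (x i0)]
    have h3 : b i0 + ∑ j ∈ Finset.univ.erase i0, b j = t :=
      Finset.add_sum_erase Finset.univ b (Finset.mem_univ i0)
    have h4 := hclb x
    rw [← hxi] at hrlt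
    linarith
  -- the shifts
  refine ⟨fun i => t / (k : ℝ) - b i, ?_, ?_, ?_⟩
  · have : ∑ i : Fin k, (t / (k : ℝ) - b i) = (k : ℝ) * (t / (k : ℝ)) - t := by
      rw [Finset.sum_sub_distrib, Finset.sum_const, Finset.card_univ, Fintype.card_fin,
        nsmul_eq_mul, ht]
    rw [this]
    field_simp
    ring
  · intro i z
    set H : ℝ := ∑ j ∈ Finset.univ.erase i, (t / (k : ℝ) - b j) with hH
    have hiH : (t / (k : ℝ) - b i) + H = 0 := by
      have h3 : (t / (k : ℝ) - b i) + H = ∑ j : Fin k, (t / (k : ℝ) - b j) :=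
        Finset.add_sum_erase Finset.univ (fun j => t / (k : ℝ) - b j) (Finset.mem_univ i)
      rw [h3]
      have : ∑ j : Fin k, (t / (k : ℝ) - b j) = (k : ℝ) * (t / (k : ℝ)) - t := by
        rw [Finset.sum_sub_distrib, Finset.sum_const, Finset.card_univ, Fintype.card_fin,
          nsmul_eq_mul, ht]
      rw [this]
      field_simp
      ring
    constructor
    · rintro r ⟨x, hxi, rfl⟩
      have h1 : f i z ≤ c x - ∑ j ∈ Finset.univ.erase i, f j (x j) :=
        (hf i z).1 ⟨x, hxi, rfl⟩
      have h2 : ∑ j ∈ Finset.univ.erase i, (f j (x j) + (t / (k : ℝ) - b j))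
          = (∑ j ∈ Finset.univ.erase i, f j (x j)) + H := by
        rw [hH, Finset.sum_add_distrib]
      rw [h2]
      linarith
    · intro w hw
      have h1 : w + H ≤ f i z := by
        apply (hf i z).2
        rintro r ⟨x, hxi, rfl⟩
        have h2 : w ≤ c x - ∑ j ∈ Finset.univ.erase i, (f j (x j) + (t / (k : ℝ) - b j)) :=
          hw ⟨x, hxi, rfl⟩
        have h3 : ∑ j ∈ Finset.univ.erase i, (f j (x j) + (t / (k : ℝ) - b j))
            = (∑ j ∈ Finset.univ.erase i, f j (x j)) + H := by
          rw [hH, Finset.sum_add_distrib]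
        rw [h3] at h2
        linarith
      linarith
  · intro i z
    have e1 : t / (k : ℝ) ≤ M := by
      rw [div_le_iff₀ hkpos]
      nlinarith
    have e2 : -M ≤ t / (k : ℝ) := by
      rw [le_div_iff₀ hkpos]
      nlinarith
    have hmx : (3 : ℝ) ≤ max (k : ℝ) 3 := le_max_right _ _
    have hmul : M * 3 ≤ M * max (k : ℝ) 3 := mul_le_mul_of_nonneg_left hmx hM0
    have h1 := hfb i z
    have h2 := hbf i z
    rw [abs_le]
    constructor <;> linarith
end

section
/- Let K ⊆ ℝⁿ be a convex body and let x ∈ K. If γ is an extreme point of the set 𝒜 of Borel probability measures on K with barycentre x, then the support of γ consists of at most n + 1 points. -/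
open MeasureTheory
open scoped ENNReal NNReal

-- helper: disjoint balls around distinct points
lemma aux_balls {E : Type*} [MetricSpace E] {m : ℕ} (p : Fin (m+2) → E)
    (hp : Function.Injective p) :
    ∃ r : ℝ, 0 < r ∧ Pairwise (Function.onFun Disjoint (fun i => Metric.ball (p i) r)) := by
  have hne : ((Finset.univ : Finset (Fin (m+2))).offDiag).Nonempty := by
    refine ⟨(0, 1), ?_⟩
    simp [Finset.mem_offDiag, Fin.ext_iff]
  set r : ℝ := (Finset.univ.offDiag).inf' hne (fun q => dist (p q.1) (p q.2) / 3) with hr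
  have hrpos : 0 < r := by
    rw [hr, Finset.lt_inf'_iff]
    intro q hq
    have hq' : q.1 ≠ q.2 := (Finset.mem_offDiag.1 hq).2.2
    have : p q.1 ≠ p q.2 := fun h => hq' (hp h)
    have := dist_pos.2 this
    linarith
  refine ⟨r, hrpos, ?_⟩
  intro i j hij
  have hmem : (i, j) ∈ (Finset.univ : Finset (Fin (m+2))).offDiag := by
    simp [Finset.mem_offDiag, hij]
  have hle : r ≤ dist (p i) (p j) / 3 := Finset.inf'_le _ hmem
  have hd : (0:ℝ) ≤ dist (p i) (p j) := dist_nonneg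
  exact Metric.ball_disjoint_ball (by linarith)

-- helper: nonzero kernel element
lemma aux_ker {n : ℕ} (L : (Fin (n+2) → ℝ) →ₗ[ℝ] ℝ × EuclideanSpace ℝ (Fin n)) :
    ∃ c : Fin (n+2) → ℝ, c ≠ 0 ∧ L c = 0 := by
  have hinj : ¬ Function.Injective L := by
    intro h
    have := LinearMap.finrank_le_finrank_of_injective h
    simp [Module.finrank_prod, Module.finrank_pi, finrank_euclideanSpace] at this
    omega
  rw [injective_iff_map_eq_zero] at hinj
  push_neg at hinj
  obtain ⟨c, h1, h2⟩ := hinj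
  exact ⟨c, h2, h1⟩

lemma aux_density {n : ℕ} (K : Set (EuclideanSpace ℝ (Fin n))) (hKm : MeasurableSet K)
    (γ : Measure (EuclideanSpace ℝ (Fin n))) [IsProbabilityMeasure γ]
    (hγK : γ Kᶜ = 0) (x : EuclideanSpace ℝ (Fin n)) (hbar : ∫ y, y ∂γ = x)
    (hyint : Integrable (fun y => y) γ)
    (f : EuclideanSpace ℝ (Fin n) → ℝ) (hfm : Measurable f)
    (hf1 : ∀ y, |f y| ≤ 1) (hfi : Integrable f γ)
    (hfsi : Integrable (fun y => f y • y) γ)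
    (hf0 : ∫ y, f y ∂γ = 0) (hfs0 : (∫ y, f y • y ∂γ) = 0) :
    IsProbabilityMeasure (γ.withDensity (fun y => ENNReal.ofReal (1 + f y))) ∧
    (γ.withDensity (fun y => ENNReal.ofReal (1 + f y))) Kᶜ = 0 ∧
    (∫ y, y ∂(γ.withDensity (fun y => ENNReal.ofReal (1 + f y)))) = x := by
  have hnn : ∀ y, 0 ≤ 1 + f y := by
    intro y
    have := (abs_le.1 (hf1 y)).1
    linarith
  have h1i : Integrable (fun y => 1 + f y) γ := (integrable_const (1:ℝ)).add hfi
  refine ⟨⟨?_⟩, ?_, ?_⟩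
  · rw [withDensity_apply _ MeasurableSet.univ, Measure.restrict_univ,
      ← ofReal_integral_eq_lintegral_ofReal h1i (ae_of_all _ hnn)]
    have h2 : (∫ y, (1 + f y) ∂γ) = 1 := by
      rw [integral_add (integrable_const (1:ℝ)) hfi, hf0]
      simp
    rw [h2, ENNReal.ofReal_one]
  · rw [withDensity_apply _ hKm.compl, Measure.restrict_eq_zero.2 hγK, lintegral_zero_measure]
  · have hrw : (fun y => ENNReal.ofReal (1 + f y))
        = fun y => ((Real.toNNReal (1 + f y) : ℝ≥0) : ℝ≥0∞) := rfl
    rw [hrw, integral_withDensity_eq_integral_smul (f := fun y => Real.toNNReal (1 + f y)) ((measurable_const.add hfm).real_toNNReal)]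
    have hrw2 : (fun y : EuclideanSpace ℝ (Fin n) => Real.toNNReal (1 + f y) • y)
        = fun y => y + f y • y := by
      funext y
      rw [NNReal.smul_def, Real.coe_toNNReal _ (hnn y), add_smul, one_smul]
    rw [hrw2, integral_add hyint hfsi, hbar, hfs0, add_zero]

theorem stmt4 {n : ℕ} (K : Set (EuclideanSpace ℝ (Fin n)))
    (hK : Convex ℝ K) (hKc : IsCompact K) (hKint : (interior K).Nonempty)
    (x : EuclideanSpace ℝ (Fin n)) (hx : x ∈ K)
    (γ : Measure (EuclideanSpace ℝ (Fin n))) [IsProbabilityMeasure γ]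
    (hγK : γ Kᶜ = 0) (hbar : ∫ y, y ∂γ = x)
    (hext : ∀ γ₁ γ₂ : Measure (EuclideanSpace ℝ (Fin n)),
      IsProbabilityMeasure γ₁ → IsProbabilityMeasure γ₂ →
      γ₁ Kᶜ = 0 → γ₂ Kᶜ = 0 → (∫ y, y ∂γ₁) = x → (∫ y, y ∂γ₂) = x →
      γ = (1/2 : ℝ≥0∞) • γ₁ + (1/2 : ℝ≥0∞) • γ₂ → γ₁ = γ ∧ γ₂ = γ) :
    ∃ S : Finset (EuclideanSpace ℝ (Fin n)), S.card ≤ n + 1 ∧ γ (↑S)ᶜ = 0 := by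
  classical
  by_contra hcon
  push_neg at hcon
  -- the "support" of γ
  set T : Set (EuclideanSpace ℝ (Fin n)) := γ.everywherePosSubset Set.univ with hT
  have hTc : γ Tᶜ = 0 := by
    have hae := Measure.everywherePosSubset_ae_eq_of_measure_ne_top (μ := γ)
      MeasurableSet.univ (by simp)
    rw [ae_eq_set] at hae
    simpa [Set.compl_eq_univ_diff] using hae.2
  have hTball : ∀ y ∈ T, ∀ r : ℝ, 0 < r → 0 < γ (Metric.ball y r) := by
    intro y hy r hr
    exact hy.2 _ (by simpa [nhdsWithin_univ] using Metric.ball_mem_nhds y hr)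
  -- T has at least n + 2 points
  have hbig : ∃ F : Finset (EuclideanSpace ℝ (Fin n)), ↑F ⊆ T ∧ F.card = n + 2 := by
    by_cases hfin : T.Finite
    · by_cases hcard : hfin.toFinset.card ≤ n + 1
      · refine absurd ?_ (hcon hfin.toFinset hcard)
        rw [Set.Finite.coe_toFinset]
        exact hTc
      · obtain ⟨F, hFS, hFcard⟩ := Finset.exists_subset_card_eq (by omega : n + 2 ≤ hfin.toFinset.card)
        refine ⟨F, ?_, hFcard⟩
        rw [← Set.Finite.coe_toFinset hfin]
        exact_mod_cast hFS
    · exact Set.Infinite.exists_subset_card_eq hfin (n+2)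
  obtain ⟨F, hFT, hFcard⟩ := hbig
  -- enumerate n+2 points of T
  set p : Fin (n+2) → EuclideanSpace ℝ (Fin n) :=
    fun i => ((F.equivFin.symm (Fin.cast hFcard.symm i) : F) : EuclideanSpace ℝ (Fin n)) with hpdef
  have hp : Function.Injective p := by
    intro i j hij
    simp only [hpdef] at hij
    have h3 := F.equivFin.symm.injective (Subtype.ext hij)
    have h4 := congrArg Fin.val h3
    simp only [Fin.coe_cast] at h4
    exact Fin.ext h4
  have hpT : ∀ i, p i ∈ T := by
    intro i
    apply hFT
    simp only [hpdef]
    exact Finset.mem_coe.2 (F.equivFin.symm _).2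
  obtain ⟨r, hrpos, hdisj⟩ := aux_balls p hp
  set B : Fin (n+2) → Set (EuclideanSpace ℝ (Fin n)) := fun i => Metric.ball (p i) r with hB
  have hBm : ∀ i, MeasurableSet (B i) := fun i => measurableSet_ball
  have hBpos : ∀ i, 0 < γ (B i) := fun i => hTball _ (hpT i) r hrpos
  -- integrability of the identity
  obtain ⟨C, hC⟩ := hKc.isBounded.subset_closedBall 0
  have haeK : ∀ᵐ y ∂γ, y ∈ K := by
    rw [ae_iff]
    exact hγK
  have hyint : Integrable (fun y : EuclideanSpace ℝ (Fin n) => y) γ := by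
    refine Integrable.mono' (integrable_const C) continuous_id.aestronglyMeasurable ?_
    filter_upwards [haeK] with y hy
    simpa [mem_closedBall_zero_iff] using hC hy
  -- linear algebra: find a balanced perturbation
  set mi : Fin (n+2) → ℝ := fun i => (γ (B i)).toReal with hmi
  set vi : Fin (n+2) → EuclideanSpace ℝ (Fin n) := fun i => ∫ y in B i, y ∂γ with hvi
  set L : (Fin (n+2) → ℝ) →ₗ[ℝ] ℝ × EuclideanSpace ℝ (Fin n) :=
    { toFun := fun c => (∑ i, c i * mi i, ∑ i, c i • vi i)
      map_add' := by
        intro a b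
        simp [add_mul, add_smul, Finset.sum_add_distrib, Prod.ext_iff]
      map_smul' := by
        intro t a
        simp [mul_assoc, smul_smul, Finset.mul_sum, Finset.smul_sum, Prod.ext_iff] } with hL
  obtain ⟨c0, hc0ne, hc0L⟩ := aux_ker L
  obtain ⟨i₁, hi₁⟩ : ∃ i, c0 i ≠ 0 := by
    by_contra h
    push_neg at h
    exact hc0ne (funext h)
  set M : ℝ := Finset.univ.sup' Finset.univ_nonempty (fun i => |c0 i|) with hM
  have hMpos : 0 < M := by
    rw [hM]
    refine lt_of_lt_of_le (abs_pos.2 hi₁) ?_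
    exact Finset.le_sup' (fun i => |c0 i|) (Finset.mem_univ i₁)
  set c : Fin (n+2) → ℝ := fun i => c0 i / M with hc
  have hc1 : ∀ i, |c i| ≤ 1 := by
    intro i
    show |c0 i / M| ≤ 1
    rw [abs_div, abs_of_pos hMpos, div_le_one hMpos, hM]
    exact Finset.le_sup' (fun i => |c0 i|) (Finset.mem_univ i)
  have hcL : L c = 0 := by
    have : c = M⁻¹ • c0 := by
      funext i
      simp [hc, div_eq_inv_mul]
    rw [this, L.map_smul, hc0L, smul_zero]
  have hLc : (∑ i, c i * mi i) = 0 ∧ (∑ i, c i • vi i) = 0 := by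
    simpa [hL, Prod.ext_iff] using hcL
  have hi₀ : c i₁ ≠ 0 := div_ne_zero hi₁ (ne_of_gt hMpos)
  -- the perturbation function
  set f : EuclideanSpace ℝ (Fin n) → ℝ := fun y => ∑ i, (B i).indicator (fun _ => c i) y with hf
  have hfm : Measurable f :=
    Finset.measurable_sum _ fun i _ => measurable_const.indicator (hBm i)
  have hfon : ∀ i, ∀ y ∈ B i, f y = c i := by
    intro i y hy
    simp only [hf]
    rw [Finset.sum_eq_single_of_mem i (Finset.mem_univ i)]
    · exact Set.indicator_of_mem hy _
    · intro j _ hj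
      exact Set.indicator_of_notMem (Set.disjoint_left.1 (hdisj hj) · hy) _
  have hf1 : ∀ y, |f y| ≤ 1 := by
    intro y
    by_cases h : ∃ i, y ∈ B i
    · obtain ⟨i, hi⟩ := h
      rw [hfon i y hi]
      exact hc1 i
    · push_neg at h
      have : f y = 0 := Finset.sum_eq_zero fun i _ => Set.indicator_of_notMem (h i) _
      rw [this]
      simp
  have hfi : Integrable f γ :=
    integrable_finset_sum _ fun i _ => (integrable_const (c i)).indicator (hBm i)
  have hfsrw : (fun y => f y • y) = fun y : EuclideanSpace ℝ (Fin n) => ∑ i, (B i).indicator (fun z => c i • z) y := by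
    funext y
    rw [hf, Finset.sum_smul]
    refine Finset.sum_congr rfl fun i _ => ?_
    exact (Set.indicator_smul_apply_left (B i) (fun _ => c i) (fun z => z) y).symm
  have hind : ∀ i : Fin (n+2), Integrable (fun y => (B i).indicator (fun z => c i • z) y) γ :=
    fun i => (hyint.smul (c i)).indicator (hBm i)
  have hfsi : Integrable (fun y => f y • y) γ := by
    rw [hfsrw]
    exact integrable_finset_sum _ fun i _ => hind i
  have hf0 : (∫ y, f y ∂γ) = 0 := by
    rw [hf]
    rw [integral_finset_sum _ fun i _ => (integrable_const (c i)).indicator (hBm i)]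
    have heach : ∀ i, (∫ y, (B i).indicator (fun _ => c i) y ∂γ) = c i * mi i := by
      intro i
      rw [integral_indicator_const _ (hBm i)]
      simp [hmi, mul_comm, measureReal_def]
    rw [Finset.sum_congr rfl fun i _ => heach i]
    exact hLc.1
  have hfs0 : (∫ y, f y • y ∂γ) = 0 := by
    rw [hfsrw]
    rw [integral_finset_sum _ fun i _ => hind i]
    have heach : ∀ i, (∫ y, (B i).indicator (fun z => c i • z) y ∂γ) = c i • vi i := by
      intro i
      rw [integral_indicator (hBm i), integral_smul]
    rw [Finset.sum_congr rfl fun i _ => heach i]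
    exact hLc.2
  -- construct the two measures
  obtain ⟨hp1, hk1, hb1⟩ := aux_density K hKc.measurableSet γ hγK x hbar hyint f hfm hf1 hfi
    hfsi hf0 hfs0
  obtain ⟨hp2, hk2, hb2⟩ := aux_density K hKc.measurableSet γ hγK x hbar hyint (fun y => -f y)
    hfm.neg (by simpa using hf1) hfi.neg
    (by
      have hneg := hfsi.neg
      simp only [neg_smul]
      exact hneg)
    (by rw [integral_neg, hf0, neg_zero])
    (by simp only [neg_smul]; rw [integral_neg, hfs0, neg_zero])
  set γ₁ := γ.withDensity (fun y => ENNReal.ofReal (1 + f y)) with hγ₁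
  set γ₂ := γ.withDensity (fun y => ENNReal.ofReal (1 + -f y)) with hγ₂
  have hsum : γ = (1/2 : ℝ≥0∞) • γ₁ + (1/2 : ℝ≥0∞) • γ₂ := by
    ext s hs
    rw [Measure.add_apply, Measure.smul_apply, Measure.smul_apply, smul_eq_mul, smul_eq_mul,
      hγ₁, hγ₂, withDensity_apply _ hs, withDensity_apply _ hs,
      ← lintegral_const_mul _ (by fun_prop),
      ← lintegral_const_mul _ (by fun_prop),
      ← lintegral_add_left (by fun_prop)]
    have hpt : ∀ y : EuclideanSpace ℝ (Fin n), (1/2 : ℝ≥0∞) * ENNReal.ofReal (1 + f y)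
        + (1/2 : ℝ≥0∞) * ENNReal.ofReal (1 + -f y) = 1 := by
      intro y
      have h1 := (abs_le.1 (hf1 y)).1
      have h2 := (abs_le.1 (hf1 y)).2
      rw [← mul_add, ← ENNReal.ofReal_add (by linarith) (by linarith)]
      have : (1 + f y) + (1 + -f y) = 2 := by ring
      rw [this]
      rw [ENNReal.ofReal_ofNat]
      rw [one_div, ENNReal.inv_mul_cancel (by norm_num) (by norm_num)]
    rw [setLIntegral_congr_fun hs (fun y _ => hpt y), setLIntegral_one]
  obtain ⟨hγeq, -⟩ := hext γ₁ γ₂ hp1 hp2 hk1 hk2 hb1 hb2 hsum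
  -- derive a contradiction at the ball B i₁
  have heval : γ₁ (B i₁) = ENNReal.ofReal (1 + c i₁) * γ (B i₁) := by
    rw [hγ₁, withDensity_apply _ (hBm i₁),
      setLIntegral_congr_fun (hBm i₁) (fun y hy => by rw [hfon i₁ y hy]),
      setLIntegral_const]
  rw [hγeq] at heval
  have hone : ENNReal.ofReal (1 + c i₁) = 1 :=
    (ENNReal.mul_eq_right (hBpos i₁).ne' (measure_lt_top γ (B i₁)).ne).1 heval.symm
  have hnn : 0 ≤ 1 + c i₁ := by
    have := (abs_le.1 (hc1 i₁)).1
    linarith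
  rw [ENNReal.ofReal_eq_one] at hone
  exact hi₀ (by linarith)
end

section
/- Let K ⊆ ℝⁿ be a convex body, x ∈ K, and let x₁,…,x_{d+1} ∈ K be affinely independent points (d ≤ n) with x = ∑_{i=1}^{d+1} λ_i x_i for positive weights λ_i summing to one. Then the measure ν = ∑_{i=1}^{d+1} λ_i δ_{x_i} is an extreme point of the set of Borel probability measures on K with barycentre x. -/
open MeasureTheory
open scoped ENNReal NNReal

theorem repr_lemma {m n : ℕ} (p : Fin m → EuclideanSpace ℝ (Fin n)) (hinj : Function.Injective p)
    (γ : Measure (EuclideanSpace ℝ (Fin n)))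
    (h0 : γ (Set.range p)ᶜ = 0) :
    γ = ∑ i, γ {p i} • Measure.dirac (p i) := by
  ext s hs
  have hm : MeasurableSet (Set.range p) := (Set.finite_range p).measurableSet
  have hdn : γ (s \ Set.range p) = 0 := by
    refine measure_mono_null (fun y hy => ?_) h0
    exact hy.2
  have h1 : γ s = γ (s ∩ Set.range p) := by
    rw [← measure_inter_add_diff s hm, hdn, add_zero]
  have h2 : s ∩ Set.range p = ⋃ i, s ∩ {p i} := by
    ext y; simp [Set.mem_range, eq_comm, and_comm]
  rw [h1, h2, measure_iUnion ?_ ?_]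
  · rw [tsum_fintype, Measure.finset_sum_apply]
    refine Finset.sum_congr rfl fun i _ => ?_
    rw [Measure.smul_apply, Measure.dirac_apply' _ hs, smul_eq_mul]
    by_cases hps : p i ∈ s
    · rw [Set.inter_eq_self_of_subset_right (by simpa using hps)]
      simp [Set.indicator_of_mem hps]
    · have : s ∩ {p i} = ∅ := by
        ext y; simp; rintro hy rfl; exact hps hy
      simp [this, Set.indicator_of_notMem hps]
  · intro i j hij
    simp only [Set.disjoint_left]
    rintro y ⟨-, hy1⟩ ⟨-, hy2⟩
    simp only [Set.mem_singleton_iff] at hy1 hy2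
    exact hij (hinj (hy1.symm.trans hy2))
  · intro i
    exact hs.inter (measurableSet_singleton _)

theorem int_lemma {m n : ℕ} (p : Fin m → EuclideanSpace ℝ (Fin n)) (c : Fin m → ℝ≥0∞)
    (hc : ∀ i, c i ≠ ∞) :
    ∫ y, y ∂(∑ i, c i • Measure.dirac (p i)) = ∑ i, (c i).toReal • p i := by
  rw [integral_finset_sum_measure (fun i _ => ?_)]
  · refine Finset.sum_congr rfl fun i _ => ?_
    rw [integral_smul_measure, integral_dirac]
  · exact ((integrable_const ((fun y => y) (p i))).congr
      (MeasureTheory.ae_eq_dirac (fun y : EuclideanSpace ℝ (Fin n) => y)).symm).smul_measure (hc i)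

theorem stmt5 {n d : ℕ} (hd : d ≤ n) (K : Set (EuclideanSpace ℝ (Fin n)))
    (hK : Convex ℝ K) (hKc : IsCompact K)
    (p : Fin (d + 1) → EuclideanSpace ℝ (Fin n)) (hp : ∀ i, p i ∈ K)
    (hind : AffineIndependent ℝ p)
    (l : Fin (d + 1) → ℝ≥0) (hl : ∀ i, 0 < l i) (hsum : ∑ i, l i = 1)
    (x : EuclideanSpace ℝ (Fin n)) (hx : x = ∑ i, (l i : ℝ) • p i)
    (ν : Measure (EuclideanSpace ℝ (Fin n)))
    (hν : ν = ∑ i, ((l i : ℝ≥0∞) • Measure.dirac (p i))) :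
    IsProbabilityMeasure ν ∧ ν Kᶜ = 0 ∧ (∫ y, y ∂ν) = x ∧
      (∀ γ₁ γ₂ : Measure (EuclideanSpace ℝ (Fin n)),
        IsProbabilityMeasure γ₁ → IsProbabilityMeasure γ₂ →
        γ₁ Kᶜ = 0 → γ₂ Kᶜ = 0 → (∫ y, y ∂γ₁) = x → (∫ y, y ∂γ₂) = x →
        ν = (1/2 : ℝ≥0∞) • γ₁ + (1/2 : ℝ≥0∞) • γ₂ → γ₁ = ν ∧ γ₂ = ν) := by
  have hinj : Function.Injective p := hind.injective
  have hlsum : ∑ i, (l i : ℝ≥0∞) = 1 := by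
    rw [← ENNReal.coe_finset_sum, hsum, ENNReal.coe_one]
  refine ⟨⟨?_⟩, ?_, ?_, ?_⟩
  · rw [hν, Measure.finset_sum_apply]
    simp only [Measure.smul_apply, Measure.dirac_apply_of_mem (Set.mem_univ _), smul_eq_mul,
      mul_one]
    exact hlsum
  · rw [hν, Measure.finset_sum_apply]
    refine Finset.sum_eq_zero fun i _ => ?_
    rw [Measure.smul_apply, Measure.dirac_apply' _ hKc.isClosed.measurableSet.compl,
      Set.indicator_of_notMem (by simpa using hp i), smul_zero]
  · rw [hν, int_lemma p _ (fun i => ENNReal.coe_ne_top), hx]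
    simp
  · -- key claim
    have hνrange : ν (Set.range p)ᶜ = 0 := by
      rw [hν, Measure.finset_sum_apply]
      refine Finset.sum_eq_zero fun i _ => ?_
      rw [Measure.smul_apply,
        Measure.dirac_apply' _ (Set.finite_range p).measurableSet.compl,
        Set.indicator_of_notMem (by simp), smul_zero]
    have key : ∀ γ : Measure (EuclideanSpace ℝ (Fin n)), IsProbabilityMeasure γ →
        γ (Set.range p)ᶜ = 0 → (∫ y, y ∂γ) = x → γ = ν := by
      intro γ hγp h0 hbary
      have hrepr := repr_lemma p hinj γ h0
      set μ : Fin (d + 1) → ℝ≥0∞ := fun i => γ {p i} with hμ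
      have hμtop : ∀ i, μ i ≠ ∞ := fun i => measure_ne_top γ _
      have hμsum : ∑ i, μ i = 1 := by
        have := congrArg (fun m : Measure (EuclideanSpace ℝ (Fin n)) => m Set.univ) hrepr
        simp only [Measure.finset_sum_apply, Measure.smul_apply,
          Measure.dirac_apply_of_mem (Set.mem_univ _), smul_eq_mul, mul_one] at this
        rw [← this, measure_univ]
      have hμsumR : ∑ i, (μ i).toReal = 1 := by
        rw [← ENNReal.toReal_sum (fun i _ => hμtop i), hμsum, ENNReal.toReal_one]
      have hbary2 : ∑ i, (μ i).toReal • p i = ∑ i, (l i : ℝ) • p i := by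
        rw [← hx, ← hbary, hrepr, int_lemma p μ hμtop]
      have hlsumR : ∑ i, (l i : ℝ) = 1 := by
        rw [← NNReal.coe_sum, hsum, NNReal.coe_one]
      have hw : (fun i => (μ i).toReal) = fun i => (l i : ℝ) := by
        refine (affineIndependent_iff_eq_of_fintype_affineCombination_eq ℝ p).mp hind _ _
          hμsumR hlsumR ?_
        rw [Finset.univ.affineCombination_eq_linear_combination p _ hμsumR,
          Finset.univ.affineCombination_eq_linear_combination p _ hlsumR]
        exact hbary2
      have hμl : ∀ i, μ i = (l i : ℝ≥0∞) := by
        intro i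
        have h1 : (μ i).toReal = ((l i : ℝ≥0∞)).toReal := by
          rw [ENNReal.coe_toReal]; exact congrFun hw i
        exact (ENNReal.toReal_eq_toReal_iff' (hμtop i) ENNReal.coe_ne_top).mp h1
      rw [hrepr, hν]
      exact Finset.sum_congr rfl fun i _ => by rw [show γ {p i} = ((l i : ℝ≥0∞)) from hμl i]
    intro γ₁ γ₂ h1p h2p h1K h2K h1b h2b heq
    have hhalf : (1/2 : ℝ≥0∞) ≠ 0 := by norm_num
    have h10 : γ₁ (Set.range p)ᶜ = 0 := by
      have := hνrange
      rw [heq] at this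
      simp only [Measure.add_apply, Measure.smul_apply, smul_eq_mul] at this
      have h := (add_eq_zero.mp this).1
      simpa [hhalf] using (mul_eq_zero.mp h).resolve_left hhalf
    have h20 : γ₂ (Set.range p)ᶜ = 0 := by
      have := hνrange
      rw [heq] at this
      simp only [Measure.add_apply, Measure.smul_apply, smul_eq_mul] at this
      have h := (add_eq_zero.mp this).2
      simpa [hhalf] using (mul_eq_zero.mp h).resolve_left hhalf
    exact ⟨key γ₁ h1p h10 h1b, key γ₂ h2p h20 h2b⟩
end

section
/- Let c : [a,b] × [a,b] → ℝ and suppose f : [a,b] → ℝ satisfies λ f(x) + (1−λ) f(y) − f(λx + (1−λ)y) ≤ λ c(λx+(1−λ)y, x) + (1−λ) c(λx+(1−λ)y, y) for all λ ∈ [0,1] and x, y ∈ [a,b]. Then for all a ≤ x₁ < x₂ < x₃ ≤ b: (f(x₃)−f(x₂))/(x₃−x₂) + (c(x₂,x₃)−c(x₂,x₁))/(x₃−x₁) − c(x₂,x₃)/(x₃−x₂) ≤ (f(x₃)−f(x₁))/(x₃−x₁) ≤ (f(x₂)−f(x₁))/(x₂−x₁) + (c(x₂,x₃)−c(x₂,x₁))/(x₃−x₁)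 + c(x₂,x₁)/(x₂−x₁). -/
theorem stmt7 (a b : ℝ) (hab : a < b) (c : ℝ → ℝ → ℝ) (f : ℝ → ℝ)
    (h : ∀ l x y : ℝ, 0 ≤ l → l ≤ 1 → x ∈ Set.Icc a b → y ∈ Set.Icc a b →
      l * f x + (1 - l) * f y - f (l * x + (1 - l) * y) ≤
        l * c (l * x + (1 - l) * y) x + (1 - l) * c (l * x + (1 - l) * y) y)
    (x₁ x₂ x₃ : ℝ) (h1 : a ≤ x₁) (h12 : x₁ < x₂) (h23 : x₂ < x₃) (h3 : x₃ ≤ b) :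
    (f x₃ - f x₂) / (x₃ - x₂) + (c x₂ x₃ - c x₂ x₁) / (x₃ - x₁) - c x₂ x₃ / (x₃ - x₂)
      ≤ (f x₃ - f x₁) / (x₃ - x₁) ∧
    (f x₃ - f x₁) / (x₃ - x₁)
      ≤ (f x₂ - f x₁) / (x₂ - x₁) + (c x₂ x₃ - c x₂ x₁) / (x₃ - x₁)
        + c x₂ x₁ / (x₂ - x₁) := by
  have h21 : (0:ℝ) < x₂ - x₁ := by linarith
  have h32 : (0:ℝ) < x₃ - x₂ := by linarith
  have h31 : (0:ℝ) < x₃ - x₁ := by linarith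
  set l : ℝ := (x₃ - x₂) / (x₃ - x₁) with hl
  have hl0 : 0 ≤ l := by positivity
  have hl1 : l ≤ 1 := by
    rw [hl, div_le_one h31]; linarith
  have hx2 : l * x₁ + (1 - l) * x₃ = x₂ := by
    rw [hl]; field_simp; ring
  have key := h l x₁ x₃ hl0 hl1 ⟨h1, by linarith⟩ ⟨by linarith, h3⟩
  rw [hx2] at key
  have hK : (x₃ - x₂) * f x₁ + (x₂ - x₁) * f x₃ - (x₃ - x₁) * f x₂ ≤
      (x₃ - x₂) * c x₂ x₁ + (x₂ - x₁) * c x₂ x₃ := by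
    have := mul_le_mul_of_nonneg_left key (le_of_lt h31)
    have e1 : (x₃ - x₁) * (l * f x₁ + (1 - l) * f x₃ - f x₂)
        = (x₃ - x₂) * f x₁ + (x₂ - x₁) * f x₃ - (x₃ - x₁) * f x₂ := by
      rw [hl]; field_simp; ring
    have e2 : (x₃ - x₁) * (l * c x₂ x₁ + (1 - l) * c x₂ x₃)
        = (x₃ - x₂) * c x₂ x₁ + (x₂ - x₁) * c x₂ x₃ := by
      rw [hl]; field_simp; ring
    rw [e1, e2] at this; exact this
  constructor
  · have e : (f x₃ - f x₁) / (x₃ - x₁) -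
        ((f x₃ - f x₂) / (x₃ - x₂) + (c x₂ x₃ - c x₂ x₁) / (x₃ - x₁) - c x₂ x₃ / (x₃ - x₂))
        = ((x₃ - x₂) * c x₂ x₁ + (x₂ - x₁) * c x₂ x₃ -
            ((x₃ - x₂) * f x₁ + (x₂ - x₁) * f x₃ - (x₃ - x₁) * f x₂))
          / ((x₃ - x₂) * (x₃ - x₁)) := by
      field_simp; ring
    have hpos : 0 ≤ (f x₃ - f x₁) / (x₃ - x₁) -
        ((f x₃ - f x₂) / (x₃ - x₂) + (c x₂ x₃ - c x₂ x₁) / (x₃ - x₁) - c x₂ x₃ / (x₃ - x₂)) := by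
      rw [e]; exact div_nonneg (by linarith) (by positivity)
    linarith
  · have e : ((f x₂ - f x₁) / (x₂ - x₁) + (c x₂ x₃ - c x₂ x₁) / (x₃ - x₁)
        + c x₂ x₁ / (x₂ - x₁)) - (f x₃ - f x₁) / (x₃ - x₁)
        = ((x₃ - x₂) * c x₂ x₁ + (x₂ - x₁) * c x₂ x₃ -
            ((x₃ - x₂) * f x₁ + (x₂ - x₁) * f x₃ - (x₃ - x₁) * f x₂))
          / ((x₂ - x₁) * (x₃ - x₁)) := by
      field_simp; ring
    have hpos : 0 ≤ ((f x₂ - f x₁) / (x₂ - x₁) + (c x₂ x₃ - c x₂ x₁) / (x₃ - x₁)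
        + c x₂ x₁ / (x₂ - x₁)) - (f x₃ - f x₁) / (x₃ - x₁) := by
      rw [e]; exact div_nonneg (by linarith) (by positivity)
    linarith
end

section
/- Let K ⊆ ℝⁿ be a convex set and c : K × K → ℝ a function that is L-Lipschitz in the second variable and satisfies |c(x,y)| ≤ Λ‖x−y‖ for all x,y ∈ K. Suppose f : K → ℝ satisfies λ f(x) + (1−λ) f(y) − f(λx + (1−λ)y) ≤ λ c(λx+(1−λ)y, x) + (1−λ) c(λx+(1−λ)y, y) for all x,y ∈ K and λ ∈ [0,1]. Then f is locally Lipschitz on the interior of K. -/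
private lemma coordSum {n : ℕ} (a : Fin n → ℝ) (j : Fin n) :
    (∑ i, a i • EuclideanSpace.single i (1:ℝ)) j = a j := by
  rw [WithLp.ofLp_sum, Finset.sum_apply]
  simp [EuclideanSpace.single_apply]

private lemma absCoordLe {n : ℕ} (v : EuclideanSpace ℝ (Fin n)) (j : Fin n) : |v j| ≤ ‖v‖ := by
  have h := norm_inner_le_norm (𝕜 := ℝ) (EuclideanSpace.single j (1:ℝ)) v
  simpa [EuclideanSpace.inner_single_left, EuclideanSpace.norm_single] using h

private lemma normSumLe {n : ℕ} (a : Fin n → ℝ) :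
    ‖∑ i, a i • EuclideanSpace.single i (1:ℝ)‖ ≤ ∑ i, |a i| := by
  refine (norm_sum_le _ _).trans (le_of_eq ?_)
  refine Finset.sum_congr rfl fun i _ => ?_
  rw [norm_smul, EuclideanSpace.norm_single, norm_one, mul_one, Real.norm_eq_abs]

set_option maxHeartbeats 1000000 in
theorem stmt8 {n : ℕ} (K : Set (EuclideanSpace ℝ (Fin n))) (hK : Convex ℝ K)
    (c : EuclideanSpace ℝ (Fin n) → EuclideanSpace ℝ (Fin n) → ℝ)
    (L Λ : ℝ) (hL : 0 ≤ L) (hΛ : 0 ≤ Λ)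
    (hcL : ∀ x ∈ K, ∀ y ∈ K, ∀ z ∈ K, |c x y - c x z| ≤ L * ‖y - z‖)
    (hcΛ : ∀ x ∈ K, ∀ y ∈ K, |c x y| ≤ Λ * ‖x - y‖)
    (f : EuclideanSpace ℝ (Fin n) → ℝ)
    (hf : ∀ x ∈ K, ∀ y ∈ K, ∀ l : ℝ, l ∈ Set.Icc (0 : ℝ) 1 →
      l * f x + (1 - l) * f y - f (l • x + (1 - l) • y) ≤
        l * c (l • x + (1 - l) • y) x + (1 - l) * c (l • x + (1 - l) • y) y) :
    ∀ x ∈ interior K, ∃ ε > (0 : ℝ), ∃ C : ℝ,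
      ∀ y ∈ Metric.ball x ε, ∀ z ∈ Metric.ball x ε, |f y - f z| ≤ C * dist y z := by
  intro x₀ hx₀
  obtain ⟨r', hr', hball⟩ := Metric.isOpen_iff.1 isOpen_interior x₀ hx₀
  set r : ℝ := r' / 2 with hr_def
  have hrpos : 0 < r := by positivity
  have hrK : Metric.closedBall x₀ r ⊆ K := by
    intro y hy
    exact interior_subset (hball (lt_of_le_of_lt (Metric.mem_closedBall.1 hy) (by
      simp only [hr_def]; linarith)))
  set e : Fin n → EuclideanSpace ℝ (Fin n) := fun i => EuclideanSpace.single i (1:ℝ) with he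
  -- two–point approximate concavity estimate
  have twoPoint : ∀ x ∈ K, ∀ y ∈ K, ∀ l : ℝ, 0 ≤ l → l ≤ 1 →
      l * f x + (1 - l) * f y - f (l • x + (1 - l) • y) ≤
        2 * Λ * (l * (1 - l)) * ‖x - y‖ := by
    intro x hx y hy l hl0 hl1
    have hm : l • x + (1 - l) • y ∈ K := hK hx hy hl0 (by linarith) (by ring)
    have h1 := hcΛ _ hm x hx
    have h2 := hcΛ _ hm y hy
    have e1 : (l • x + (1 - l) • y) - x = (1 - l) • (y - x) := by module
    have e2 : (l • x + (1 - l) • y) - y = l • (x - y) := by module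
    rw [e1, norm_smul, Real.norm_eq_abs, abs_of_nonneg (by linarith : (0:ℝ) ≤ 1 - l),
      norm_sub_rev] at h1
    rw [e2, norm_smul, Real.norm_eq_abs, abs_of_nonneg hl0] at h2
    have h3 := hf x hx y hy l ⟨hl0, hl1⟩
    have b1 : c (l • x + (1 - l) • y) x ≤ Λ * ((1 - l) * ‖x - y‖) :=
      le_trans (le_abs_self _) h1
    have b2 : c (l • x + (1 - l) • y) y ≤ Λ * (l * ‖x - y‖) :=
      le_trans (le_abs_self _) h2
    nlinarith [mul_le_mul_of_nonneg_left b1 hl0,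
      mul_le_mul_of_nonneg_left b2 (by linarith : (0:ℝ) ≤ 1 - l)]
  -- crude version
  have twoPoint' : ∀ x ∈ K, ∀ y ∈ K, ∀ l : ℝ, 0 ≤ l → l ≤ 1 →
      l * f x + (1 - l) * f y - f (l • x + (1 - l) • y) ≤ Λ * ‖x - y‖ := by
    intro x hx y hy l hl0 hl1
    refine (twoPoint x hx y hy l hl0 hl1).trans ?_
    have h1 : 2 * (l * (1 - l)) ≤ 1 := by nlinarith
    nlinarith [norm_nonneg (x - y), mul_nonneg hΛ (norm_nonneg (x - y)),
      mul_le_mul_of_nonneg_left h1 (mul_nonneg hΛ (norm_nonneg (x - y)))]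
  -- a lower bound B for f at the 2n+1 vertices
  obtain ⟨b, hb⟩ := (Set.finite_range
    (fun i : Fin n => min (f (x₀ + (r * 1) • e i)) (f (x₀ + (r * (-1)) • e i)))).bddBelow
  set B : ℝ := min (f x₀) b with hB_def
  have hBx₀ : B ≤ f x₀ := min_le_left _ _
  have hBv : ∀ (i : Fin n) (s : ℝ), s = 1 ∨ s = -1 → B ≤ f (x₀ + (r * s) • e i) := by
    intro i s hs
    have h1 : b ≤ min (f (x₀ + (r * 1) • e i)) (f (x₀ + (r * (-1)) • e i)) :=
      hb (Set.mem_range_self i)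
    have h2 : B ≤ b := min_le_right _ _
    rcases hs with h | h <;> rw [h]
    · exact h2.trans (h1.trans (min_le_left _ _))
    · exact h2.trans (h1.trans (min_le_right _ _))
  -- vertices are in the closed ball of radius r
  have hvmem : ∀ (i : Fin n) (s : ℝ), s = 1 ∨ s = -1 →
      x₀ + (r * s) • e i ∈ Metric.closedBall x₀ r := by
    intro i s hs
    rw [Metric.mem_closedBall, dist_eq_norm]
    have h1 : x₀ + (r * s) • e i - x₀ = (r * s) • e i := by abel
    rw [h1, norm_smul, he, EuclideanSpace.norm_single, Real.norm_eq_abs, norm_one, mul_one]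
    have h2 : |r * s| = r := by rcases hs with h | h <;> rw [h] <;>
      simp [abs_of_nonneg hrpos.le, abs_of_nonpos (by linarith : r * (-1) ≤ 0)]
    rw [h2]
  -- key induction: approximate Jensen over the cross-polytope vertices
  have main : ∀ k : ℕ, ∀ ν : Fin n → ℝ, (∀ i, 0 ≤ ν i) → (∑ i, ν i) ≤ 1 →
      (∀ i : Fin n, k ≤ (i : ℕ) → ν i = 0) → ∀ s : Fin n → ℝ,
      (∀ i, s i = 1 ∨ s i = -1) →
      B - k * (2 * Λ * r) ≤ f (x₀ + ∑ i, (ν i * (r * s i)) • e i) := by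
    intro k
    induction k with
    | zero =>
      intro ν hν0 hνs hsup s hs
      have hz : ∀ i : Fin n, ν i = 0 := fun i => hsup i (Nat.zero_le _)
      have hpt : (x₀ + ∑ i, (ν i * (r * s i)) • e i) = x₀ := by
        have h1 : ∀ i ∈ Finset.univ, (ν i * (r * s i)) • e i =
            (0 : EuclideanSpace ℝ (Fin n)) := by
          intro i _; rw [hz i]; simp
        rw [Finset.sum_congr rfl h1]; simp
      rw [hpt]; simpa using hBx₀
    | succ k ih =>
      intro ν hν0 hνs hsup s hs
      have herr : (0:ℝ) ≤ 2 * Λ * r := by positivity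
      by_cases hkn : n ≤ k
      · have h := ih ν hν0 hνs (fun i _ => hsup i (by omega)) s hs
        have hk : (k:ℝ) ≤ ((k+1:ℕ):ℝ) := by push_cast; linarith
        nlinarith [mul_le_mul_of_nonneg_right hk herr]
      · push_neg at hkn
        set j : Fin n := ⟨k, hkn⟩ with hj
        set t : ℝ := ν j with ht
        have ht0 : 0 ≤ t := hν0 j
        have ht1 : t ≤ 1 := by
          refine le_trans ?_ hνs
          exact Finset.single_le_sum (fun i _ => hν0 i) (Finset.mem_univ j)
        set v : EuclideanSpace ℝ (Fin n) := x₀ + (r * s j) • e j with hv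
        have hfv : B ≤ f v := hBv j (s j) (hs j)
        have hvball : v ∈ Metric.closedBall x₀ r := hvmem j (s j) (hs j)
        by_cases htlt : t < 1
        · -- renormalized weights
          set ν' : Fin n → ℝ := fun i => if i = j then 0 else ν i / (1 - t) with hν'
          have h1t : 0 < 1 - t := by linarith
          have hν'0 : ∀ i, 0 ≤ ν' i := by
            intro i; simp only [hν']
            split
            · exact le_refl 0
            · exact div_nonneg (hν0 i) h1t.le
          have hsum' : ∑ i, ν' i = ((∑ i, ν i) - t) / (1 - t) := by
            rw [eq_div_iff h1t.ne', Finset.sum_mul]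
            have h1 : ∀ i ∈ Finset.univ, ν' i * (1 - t) =
                ν i - (if i = j then t else 0) := by
              intro i _
              by_cases h : i = j
              · simp [hν', h, ← ht]
              · simp only [hν', h, if_false]
                field_simp
                simp
            rw [Finset.sum_congr rfl h1, Finset.sum_sub_distrib]
            simp [Finset.sum_ite_eq']
          have hν's : ∑ i, ν' i ≤ 1 := by
            rw [hsum', div_le_one h1t]; linarith
          have hsup' : ∀ i : Fin n, k ≤ (i : ℕ) → ν' i = 0 := by
            intro i hi
            by_cases h : i = j
            · simp [hν', h]
            · have : ¬ ((i : ℕ) = k) := by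
                intro hc; exact h (Fin.ext hc)
              have h2 : ν i = 0 := hsup i (by omega)
              simp [hν', h, h2]
          have hw := ih ν' hν'0 hν's hsup' s hs
          set w : EuclideanSpace ℝ (Fin n) := x₀ + ∑ i, (ν' i * (r * s i)) • e i with hwdef
          have habs_s : ∀ i : Fin n, |s i| = 1 := by
            intro i; rcases hs i with h | h <;> rw [h] <;> norm_num
          have hwball : w ∈ Metric.closedBall x₀ r := by
            rw [Metric.mem_closedBall, dist_eq_norm]
            have h1 : w - x₀ = ∑ i, (ν' i * (r * s i)) • e i := by
              rw [hwdef]; abel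
            rw [h1]
            refine le_trans (normSumLe _) ?_
            have h2 : ∀ i ∈ Finset.univ, |ν' i * (r * s i)| = ν' i * r := by
              intro i _
              rw [abs_mul, abs_mul, abs_of_nonneg (hν'0 i), abs_of_nonneg hrpos.le, habs_s i,
                mul_one]
            rw [Finset.sum_congr rfl h2, ← Finset.sum_mul]
            nlinarith
          have hvK : v ∈ K := hrK hvball
          have hwK : w ∈ K := hrK hwball
          -- the decomposition
          have keyEq : t • v + (1 - t) • w = x₀ + ∑ i, (ν i * (r * s i)) • e i := by
            ext p
            have hL1 : (t • v + (1 - t) • w) p = t * (v p) + (1 - t) * (w p) := rfl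
            have hvp : v p = x₀ p + (r * s j) * (if p = j then 1 else 0) := by
              have : v p = x₀ p + ((r * s j) • e j) p := rfl
              rw [this]
              congr 1
              have : ((r * s j) • e j) p = (r * s j) * (e j p) := rfl
              rw [this, he]
              simp [EuclideanSpace.single_apply]
            have hwp : w p = x₀ p + ν' p * (r * s p) := by
              have h1 : w p = x₀ p + (∑ i, (ν' i * (r * s i)) • e i) p := rfl
              rw [h1, he, coordSum]
            have hRp : (x₀ + ∑ i, (ν i * (r * s i)) • e i) p
                = x₀ p + ν p * (r * s p) := by
              have h1 : (x₀ + ∑ i, (ν i * (r * s i)) • e i) p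
                  = x₀ p + (∑ i, (ν i * (r * s i)) • e i) p := rfl
              rw [h1, he, coordSum]
            rw [hL1, hvp, hwp, hRp]
            by_cases h : p = j
            · subst h
              simp only [hν', eq_self_iff_true, if_true, mul_one, if_pos rfl]
              rw [← ht]; ring
            · simp only [if_neg h, hν', if_neg h, mul_zero]
              field_simp
              ring
          have h2p := twoPoint' v hvK w hwK t ht0 ht1
          rw [keyEq] at h2p
          clear_value w
          clear_value v
          clear_value t
          clear_value B
          have hnorm : ‖v - w‖ ≤ 2 * r := by
            calc ‖v - w‖ = dist v w := (dist_eq_norm v w).symm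
              _ ≤ dist v x₀ + dist x₀ w := dist_triangle v x₀ w
              _ ≤ r + r := add_le_add (Metric.mem_closedBall.1 hvball)
                  (by rw [dist_comm]; exact Metric.mem_closedBall.1 hwball)
              _ = 2 * r := by ring
          have hΛn : Λ * ‖v - w‖ ≤ Λ * (2 * r) := mul_le_mul_of_nonneg_left hnorm hΛ
          have hb1 : t * B ≤ t * f v := mul_le_mul_of_nonneg_left hfv ht0
          have hb2 : (1 - t) * (B - k * (2 * Λ * r)) ≤ (1 - t) * f w :=
            mul_le_mul_of_nonneg_left hw h1t.le
          have hcast : ((k+1:ℕ):ℝ) = (k:ℝ) + 1 := by push_cast; ring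
          rw [hcast]
          have hkr : (0:ℝ) ≤ (k:ℝ) * (2 * Λ * r) := by positivity
          nlinarith [mul_nonneg ht0 hkr]
        · -- t = 1 : all other weights vanish
          clear_value v
          clear_value t
          clear_value B
          have ht1' : t = 1 := le_antisymm ht1 (not_lt.1 htlt)
          have hzero : ∀ i : Fin n, i ≠ j → ν i = 0 := by
            intro i hij
            by_contra hne
            have hpos : 0 < ν i := lt_of_le_of_ne (hν0 i) (Ne.symm hne)
            have hpair : ν j + ν i ≤ ∑ i', ν i' := by
              have hsub : ({j, i} : Finset (Fin n)) ⊆ Finset.univ := Finset.subset_univ _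
              have := Finset.sum_le_sum_of_subset_of_nonneg hsub
                (fun i' _ _ => hν0 i')
              rwa [Finset.sum_pair (Ne.symm hij)] at this
            rw [← ht, ht1'] at hpair
            linarith
          have hpt : x₀ + ∑ i, (ν i * (r * s i)) • e i = v := by
            rw [hv]
            congr 1
            rw [Finset.sum_eq_single j]
            · rw [← ht, ht1', one_mul]
            · intro i _ hij; rw [hzero i hij]; simp
            · intro h; exact absurd (Finset.mem_univ j) h
          rw [hpt]
          have hcast : ((k+1:ℕ):ℝ) = (k:ℝ) + 1 := by push_cast; ring
          rw [hcast]
          have hkr : (0:ℝ) ≤ ((k:ℝ) + 1) * (2 * Λ * r) := by positivity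
          linarith
  -- the small radius
  set ε₀ : ℝ := r / (2 * (n + 1)) with hε₀
  have hε₀pos : 0 < ε₀ := by positivity
  have hε₀r : ε₀ ≤ r := by
    rw [hε₀, div_le_iff₀ (by positivity)]
    nlinarith [Nat.cast_nonneg (α := ℝ) n]
  have hεK : Metric.closedBall x₀ ε₀ ⊆ K :=
    subset_trans (Metric.closedBall_subset_closedBall hε₀r) hrK
  set lo : ℝ := B - n * (2 * Λ * r) with hlo
  -- lower bound on the small ball
  have lowerB : ∀ y ∈ Metric.closedBall x₀ ε₀, lo ≤ f y := by
    intro y hy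
    set cc : Fin n → ℝ := fun i => y i - x₀ i with hcc
    set s : Fin n → ℝ := fun i => if 0 ≤ cc i then 1 else -1 with hs_def
    set ν : Fin n → ℝ := fun i => |cc i| / r with hν_def
    have hs : ∀ i, s i = 1 ∨ s i = -1 := by
      intro i; simp only [hs_def]; split
      · exact Or.inl rfl
      · exact Or.inr rfl
    have hν0 : ∀ i, 0 ≤ ν i := fun i => div_nonneg (abs_nonneg _) hrpos.le
    have hccle : ∀ i, |cc i| ≤ ε₀ := by
      intro i
      have h1 : cc i = (y - x₀) i := rfl
      rw [h1]
      refine (absCoordLe (y - x₀) i).trans ?_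
      rw [← dist_eq_norm]
      exact Metric.mem_closedBall.1 hy
    have hνs : ∑ i, ν i ≤ 1 := by
      have h1 : ∀ i ∈ Finset.univ, ν i ≤ ε₀ / r := by
        intro i _
        simp only [hν_def]
        gcongr
        exact hccle i
      have h2 : (∑ i, ν i) ≤ (n : ℝ) * (ε₀ / r) := by
        refine le_trans (Finset.sum_le_sum h1) ?_
        rw [Finset.sum_const, Finset.card_univ, Fintype.card_fin, nsmul_eq_mul]
      have h3 : (n : ℝ) * (ε₀ / r) ≤ 1 := by
        have h4 : (n : ℝ) * (ε₀ / r) = n / (2 * (n + 1)) := by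
          rw [hε₀]; field_simp
        rw [h4, div_le_one (by positivity)]
        have := Nat.cast_nonneg (α := ℝ) n
        linarith
      linarith
    have hrepr : x₀ + ∑ i, (ν i * (r * s i)) • e i = y := by
      ext p
      have h1 : (x₀ + ∑ i, (ν i * (r * s i)) • e i) p
          = x₀ p + ν p * (r * s p) := by
        have h2 : (x₀ + ∑ i, (ν i * (r * s i)) • e i) p
            = x₀ p + (∑ i, (ν i * (r * s i)) • e i) p := rfl
        rw [h2, he, coordSum]
      rw [h1]
      have h3 : ν p * (r * s p) = cc p := by
        simp only [hν_def, hs_def]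
        split
        · rename_i hcp
          rw [abs_of_nonneg hcp]; field_simp
        · rename_i hcp
          push_neg at hcp
          rw [abs_of_neg hcp]; field_simp
      rw [h3]
      simp only [hcc]
      ring
    have hmain := main n ν hν0 hνs (fun i hi => absurd hi (by omega)) s hs
    rw [hrepr] at hmain
    exact hmain
  have hx₀mem : x₀ ∈ Metric.closedBall x₀ ε₀ := Metric.mem_closedBall_self hε₀pos.le
  set hi : ℝ := 2 * f x₀ - lo + 4 * Λ * r with hhi
  -- upper bound on the small ball
  have upperB : ∀ u ∈ Metric.closedBall x₀ ε₀, f u ≤ hi := by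
    intro u hu
    set u' : EuclideanSpace ℝ (Fin n) := x₀ + (x₀ - u) with hu'def
    have hu' : u' ∈ Metric.closedBall x₀ ε₀ := by
      rw [Metric.mem_closedBall, dist_eq_norm]
      have h1 : u' - x₀ = x₀ - u := by rw [hu'def]; abel
      rw [h1, ← dist_eq_norm, dist_comm]
      exact Metric.mem_closedBall.1 hu
    have hmid : (1/2 : ℝ) • u + (1 - 1/2 : ℝ) • u' = x₀ := by
      rw [hu'def]; module
    have h := twoPoint' u (hεK hu) u' (hεK hu') (1/2) (by norm_num) (by norm_num)
    rw [hmid] at h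
    have hnorm : ‖u - u'‖ ≤ 2 * r := by
      calc ‖u - u'‖ = dist u u' := (dist_eq_norm u u').symm
        _ ≤ dist u x₀ + dist x₀ u' := dist_triangle u x₀ u'
        _ ≤ ε₀ + ε₀ := add_le_add (Metric.mem_closedBall.1 hu)
            (by rw [dist_comm]; exact Metric.mem_closedBall.1 hu')
        _ ≤ 2 * r := by linarith
    have hΛn : Λ * ‖u - u'‖ ≤ Λ * (2 * r) := mul_le_mul_of_nonneg_left hnorm hΛ
    have hlo' : lo ≤ f u' := lowerB u' hu'
    rw [hhi]; linarith
  have hD0 : (0:ℝ) ≤ hi - lo := by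
    have h1 := lowerB x₀ hx₀mem
    have h2 := upperB x₀ hx₀mem
    linarith
  set ε' : ℝ := ε₀ / 2 with hε'
  have hε'pos : 0 < ε' := by positivity
  set C : ℝ := (hi - lo + 4 * Λ * ε₀) / ε' with hC
  refine ⟨ε', hε'pos, C, ?_⟩
  have key : ∀ y ∈ Metric.ball x₀ ε', ∀ z ∈ Metric.ball x₀ ε', f z - f y ≤ C * dist y z := by
    intro y hy z hz
    by_cases hyz : y = z
    · subst hyz; simp
    · set d : ℝ := dist y z with hd_def
      have hd : 0 < d := dist_pos.2 hyz
      have hymem : y ∈ Metric.closedBall x₀ ε₀ := by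
        rw [Metric.mem_closedBall]
        have := Metric.mem_ball.1 hy
        rw [hε'] at this; linarith
      have hzmem : z ∈ Metric.closedBall x₀ ε₀ := by
        rw [Metric.mem_closedBall]
        have := Metric.mem_ball.1 hz
        rw [hε'] at this; linarith
      set w : EuclideanSpace ℝ (Fin n) := y + (ε' / d) • (y - z) with hwdef
      have hwmem : w ∈ Metric.closedBall x₀ ε₀ := by
        rw [Metric.mem_closedBall, dist_eq_norm]
        have h1 : w - x₀ = (y - x₀) + (ε' / d) • (y - z) := by rw [hwdef]; abel
        rw [h1]
        refine (norm_add_le _ _).trans ?_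
        rw [norm_smul, Real.norm_eq_abs, abs_of_nonneg (by positivity : (0:ℝ) ≤ ε' / d)]
        have h2 : ‖y - z‖ = d := by rw [hd_def, dist_eq_norm]
        rw [h2, div_mul_cancel₀ _ hd.ne']
        have h3 : ‖y - x₀‖ ≤ ε' := by
          rw [← dist_eq_norm]
          exact (Metric.mem_ball.1 hy).le
        rw [hε'] at h3 ⊢; linarith
      set l : ℝ := d / (d + ε') with hl_def
      have hl0 : 0 ≤ l := by positivity
      have hl1 : l ≤ 1 := by
        rw [hl_def, div_le_one (by positivity)]; linarith
      have hmid : l • w + (1 - l) • z = y := by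
        rw [hwdef, hl_def]
        match_scalars
        · field_simp
        · field_simp
          ring
      have h := twoPoint w (hεK hwmem) z (hεK hzmem) l hl0 hl1
      rw [hmid] at h
      have hwz : ‖w - z‖ ≤ 2 * ε₀ := by
        calc ‖w - z‖ = dist w z := (dist_eq_norm w z).symm
          _ ≤ dist w x₀ + dist x₀ z := dist_triangle w x₀ z
          _ ≤ ε₀ + ε₀ := add_le_add (Metric.mem_closedBall.1 hwmem)
              (by rw [dist_comm]; exact Metric.mem_closedBall.1 hzmem)
          _ = 2 * ε₀ := by ring
      have hlle : l ≤ d / ε' := by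
        rw [hl_def, div_le_div_iff₀ (by positivity) hε'pos]
        nlinarith
      clear_value l
      clear_value w
      clear_value d
      clear_value C
      clear_value ε'
      clear_value hi
      clear_value lo
      have s1 : l * (f z - f w) ≤ l * (hi - lo) := by
        refine mul_le_mul_of_nonneg_left ?_ hl0
        have := lowerB w hwmem
        have := upperB z hzmem
        linarith
      have s2 : l * (hi - lo) ≤ (d / ε') * (hi - lo) := mul_le_mul_of_nonneg_right hlle hD0
      have s3 : 2 * Λ * (l * (1 - l)) * ‖w - z‖ ≤ 2 * Λ * (d / ε') * (2 * ε₀) := by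
        have h1 : l * (1 - l) ≤ d / ε' := by nlinarith
        have h2 : 2 * Λ * (l * (1 - l)) ≤ 2 * Λ * (d / ε') :=
          mul_le_mul_of_nonneg_left h1 (by positivity)
        refine mul_le_mul h2 hwz (norm_nonneg _) (by positivity)
      have hCd : C * d = (d / ε') * (hi - lo) + 2 * Λ * (d / ε') * (2 * ε₀) := by
        rw [hC]; field_simp; ring
      rw [hCd]
      linarith
  intro y hy z hz
  have h1 := key y hy z hz
  have h2 := key z hz y hy
  rw [dist_comm z y] at h2
  exact abs_sub_le_iff.2 ⟨by linarith, by linarith⟩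
end
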